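/- arXiv:2302.10083 — 2 statements merged into one kernel-verified Lean document; each statement's English description precedes it below -/
import Mathlib

section
/- Let S_0 : Σ^n → {0,1} be the indicator of the support of f embedded in {0,1}^n ⊆ Σ^n (zero on strings containing a wildcard), and let M = M_n ∘ ⋯ ∘ M_1 (S_0) be the result of applying the Merge transform across each dimension once in any order. Then M(u) = 1 if and only if u is an implicant of f that covers at least one point, i.e., f(x) = 1 for all x ∈ {0,1}^n covered by u. -/
abbrev MTerm (n : ℕ) := Fin n → Option Bool

abbrev QState (n : ℕ) := MTerm n → Bool

def covers {n : ℕ} (u : MTerm n) (x : Fin n → Bool) : Prop :=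
  ∀ i : Fin n, ∀ b : Bool, u i = some b → x i = b

/-- The `Merge` transform across dimension `i`. -/
def MergeDim {n : ℕ} (i : Fin n) (S : QState n) : QState n :=
  fun u =>
    if u i = none then
      S u || (S (Function.update u i (some false)) && S (Function.update u i (some true)))
    else S u

/-- Key invariant lemma: after folding over a list `l` of dimensions, provided
`p ++ l` is nodup and `S` satisfies the invariant for processed set `p`, the result
satisfies the invariant for processed set `p ++ l`. -/
theorem merge_invariant {n : ℕ} (f : (Fin n → Bool) → Bool) :
    ∀ (l p : List (Fin n)) (S : QState n),
      (p ++ l).Nodup →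
      (∀ u, S u = true ↔ (∀ i, u i = none → i ∈ p) ∧ ∀ x, covers u x → f x = true) →
      ∀ u, (l.foldl (fun S i => MergeDim i S) S) u = true ↔
        ((∀ i, u i = none → i ∈ p ++ l) ∧ ∀ x, covers u x → f x = true) := by
  intro l
  induction l with
  | nil => intro p S _ hp u; simpa using hp u
  | cons j l' ih =>
    intro p S hnd hp u
    have hnd' : ((p ++ [j]) ++ l').Nodup := by simpa using hnd
    have hj : j ∉ p := by
      have := (List.nodup_append'.mp hnd).2.2
      intro hjp
      exact this hjp List.mem_cons_self
    have hinv : ∀ u, (MergeDim j S) u = true ↔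
        (∀ i, u i = none → i ∈ p ++ [j]) ∧ ∀ x, covers u x → f x = true := by
      intro u
      unfold MergeDim
      by_cases hu : u j = none
      · have hSu : S u = false := by
          by_contra h
          rw [Bool.not_eq_false] at h
          exact hj (((hp u).mp h).1 j hu)
        rw [if_pos hu, hSu]
        simp only [Bool.false_or, Bool.and_eq_true, hp]
        constructor
        · rintro ⟨⟨h0w, h0i⟩, ⟨h1w, h1i⟩⟩
          refine ⟨?_, ?_⟩
          · intro i hi
            by_cases hij : i = j
            · subst hij; simp
            · have : Function.update u j (some false) i = none := by
                rw [Function.update_of_ne hij]; exact hi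
              exact List.mem_append_left _ (h0w i this)
          · intro x hx
            cases hxj : x j with
            | false =>
              apply h0i x
              intro i b hb
              by_cases hij : i = j
              · subst hij; rw [Function.update_self] at hb
                cases hb; exact hxj
              · rw [Function.update_of_ne hij] at hb; exact hx i b hb
            | true =>
              apply h1i x
              intro i b hb
              by_cases hij : i = j
              · subst hij; rw [Function.update_self] at hb
                cases hb; exact hxj
              · rw [Function.update_of_ne hij] at hb; exact hx i b hb
        · rintro ⟨hw, hi⟩
          have hwb : ∀ b : Bool, ∀ i, Function.update u j (some b) i = none → i ∈ p := by
            intro b i hib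
            by_cases hij : i = j
            · subst hij; rw [Function.update_self] at hib; cases hib
            · rw [Function.update_of_ne hij] at hib
              have := hw i hib
              rcases List.mem_append.mp this with h | h
              · exact h
              · exact absurd (List.mem_singleton.mp h) hij
          have hib : ∀ b : Bool, ∀ x, covers (Function.update u j (some b)) x → f x = true := by
            intro b x hx
            apply hi
            intro i c hc
            by_cases hij : i = j
            · subst hij; rw [hu] at hc; cases hc
            · exact hx i c (by rw [Function.update_of_ne hij]; exact hc)
          exact ⟨⟨hwb false, hib false⟩, ⟨hwb true, hib true⟩⟩
      · rw [if_neg hu, hp]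
        constructor
        · rintro ⟨hw, hi⟩
          exact ⟨fun i h => List.mem_append_left _ (hw i h), hi⟩
        · rintro ⟨hw, hi⟩
          refine ⟨fun i h => ?_, hi⟩
          rcases List.mem_append.mp (hw i h) with h' | h'
          · exact h'
          · exact absurd (by rw [List.mem_singleton.mp h'] at h; exact h) hu
    have := ih (p ++ [j]) (MergeDim j S) hnd' hinv u
    simpa using this

open Classical in
/-- Starting from the indicator `S₀` of the support of `f` embedded into `Σ^n`
(zero on strings containing a wildcard) and applying the Merge transform once across
each dimension, in any order, yields the indicator of the set of implicants of `f`
covering at least one point. -/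
theorem stmt_12 {n : ℕ} (f : (Fin n → Bool) → Bool)
    (S₀ : QState n)
    (hS₀ : ∀ u : MTerm n,
      S₀ u = true ↔ ∃ x : Fin n → Bool, (∀ i, u i = some (x i)) ∧ f x = true)
    (l : List (Fin n)) (hnd : l.Nodup) (hall : ∀ i : Fin n, i ∈ l) :
    ∀ u : MTerm n,
      (l.foldl (fun S i => MergeDim i S) S₀) u = true ↔
        ((∃ x, covers u x) ∧ ∀ x, covers u x → f x = true) := by
  have hbase : ∀ u, S₀ u = true ↔
      (∀ i, u i = none → i ∈ ([] : List (Fin n))) ∧ ∀ x, covers u x → f x = true := by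
    intro u
    rw [hS₀]
    constructor
    · rintro ⟨x, hx, hfx⟩
      refine ⟨fun i hi => ?_, fun y hy => ?_⟩
      · rw [hx i] at hi; cases hi
      · have : y = x := funext fun i => hy i (x i) (hx i)
        rw [this]; exact hfx
    · rintro ⟨hw, hi⟩
      set x : Fin n → Bool := fun i => (u i).getD false with hxdef
      have hx : ∀ i, u i = some (x i) := by
        intro i
        cases h : u i with
        | none => exact absurd (hw i h) (by simp)
        | some b => simp [hxdef, h]
      refine ⟨x, hx, hi x ?_⟩
      intro i b hb
      rw [hx i] at hb
      exact Option.some_inj.mp hb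
  intro u
  have := merge_invariant f l [] S₀ (by simpa using hnd) hbase u
  rw [this]
  constructor
  · rintro ⟨_, hi⟩
    refine ⟨⟨fun i => (u i).getD false, fun i b hb => by simp [hb]⟩, hi⟩
  · rintro ⟨_, hi⟩
    exact ⟨fun i _ => by simpa using hall i, hi⟩
end

section
/- Let M : Σ^n → {0,1} be the indicator of the set of implicants of f (strings u with f = 1 on all points covered by u, restricted to u covering at least one point, i.e., all u ∈ Σ^n). Applying the Reduce transform across each dimension once, in any order, to M yields the indicator of the set of prime implicants of f. -/
def Implicant {n : ℕ} (f : (Fin n → Bool) → Bool) (u : MTerm n) : Prop :=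
  ∀ x, covers u x → f x = true

def PrimeImplicant {n : ℕ} (f : (Fin n → Bool) → Bool) (u : MTerm n) : Prop :=
  Implicant f u ∧ ∀ i : Fin n, u i ≠ none → ¬ Implicant f (Function.update u i none)

/-- The `Reduce` transform across dimension `i`. -/
def ReduceDim {n : ℕ} (i : Fin n) (S : QState n) : QState n :=
  fun v =>
    if v i = none then S v
    else S v && !(S (Function.update v i none))

lemma impl_mono {n : ℕ} {f : (Fin n → Bool) → Bool} {v w : MTerm n}
    (hv : Implicant f v) (h : ∀ k b, v k = some b → w k = some b) :
    Implicant f w := by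
  intro x hx
  exact hv x (fun k b hk => hx k b (h k b hk))

lemma impl_double {n : ℕ} {f : (Fin n → Bool) → Bool} {u : MTerm n} {i j : Fin n}
    (hv : Implicant f (Function.update (Function.update u j none) i none)) :
    Implicant f (Function.update u i none) := by
  refine impl_mono hv ?_
  intro k b hk
  by_cases hki : k = i
  · subst hki; simp [Function.update_self] at hk
  · rw [Function.update_of_ne hki] at hk ⊢
    by_cases hkj : k = j
    · subst hkj; simp [Function.update_self] at hk
    · rwa [Function.update_of_ne hkj] at hk

lemma step_lemma {n : ℕ} {f : (Fin n → Bool) → Bool} (j : Fin n)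
    {P : Fin n → Prop} {S : QState n}
    (hS : ∀ u, S u = true ↔
      Implicant f u ∧ ∀ i, P i → u i ≠ none → ¬ Implicant f (Function.update u i none)) :
    ∀ u, ReduceDim j S u = true ↔
      Implicant f u ∧ ∀ i, (P i ∨ i = j) → u i ≠ none →
        ¬ Implicant f (Function.update u i none) := by
  intro u
  by_cases huj : u j = none
  · have hr : ReduceDim j S u = S u := by simp [ReduceDim, huj]
    rw [hr, hS]
    constructor
    · rintro ⟨h1, h2⟩
      refine ⟨h1, fun i hi hne => ?_⟩
      rcases hi with hp | rfl
      · exact h2 i hp hne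
      · exact absurd huj hne
    · rintro ⟨h1, h2⟩
      exact ⟨h1, fun i hp hne => h2 i (Or.inl hp) hne⟩
  · have hr : ReduceDim j S u = (S u && !(S (Function.update u j none))) := by
      simp [ReduceDim, huj]
    rw [hr, Bool.and_eq_true, Bool.not_eq_true']
    constructor
    · rintro ⟨hu, hred⟩
      rw [hS] at hu
      obtain ⟨h1, h2⟩ := hu
      have hj : ¬ Implicant f (Function.update u j none) := by
        intro himpl
        have hT : S (Function.update u j none) = true := by
          rw [hS]
          refine ⟨himpl, fun i hp hne himpl2 => ?_⟩
          have hij : i ≠ j := by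
            intro h; subst h; exact hne (Function.update_self _ _ _)
          have hui : u i ≠ none := by
            rwa [Function.update_of_ne hij] at hne
          exact h2 i hp hui (impl_double himpl2)
        rw [hT] at hred; exact Bool.true_eq_false.mp hred
      refine ⟨h1, fun i hi hne => ?_⟩
      rcases hi with hp | rfl
      · exact h2 i hp hne
      · exact hj
    · rintro ⟨h1, h2⟩
      constructor
      · rw [hS]
        exact ⟨h1, fun i hp hne => h2 i (Or.inl hp) hne⟩
      · by_contra hcon
        have hT : S (Function.update u j none) = true := by
          cases hS2 : S (Function.update u j none) with
          | true => rfl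
          | false => exact absurd hS2 hcon
        rw [hS] at hT
        exact h2 j (Or.inr rfl) huj hT.1

lemma fold_lemma {n : ℕ} {f : (Fin n → Bool) → Bool} :
    ∀ (l : List (Fin n)) (P : Fin n → Prop) (S : QState n),
    (∀ u, S u = true ↔
      Implicant f u ∧ ∀ i, P i → u i ≠ none → ¬ Implicant f (Function.update u i none)) →
    ∀ u, (l.foldl (fun S i => ReduceDim i S) S) u = true ↔
      Implicant f u ∧ ∀ i, (P i ∨ i ∈ l) → u i ≠ none →
        ¬ Implicant f (Function.update u i none) := by
  intro l
  induction l with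
  | nil =>
    intro P S hS u
    simp only [List.foldl_nil, hS, List.not_mem_nil]
    constructor
    · rintro ⟨h1, h2⟩
      exact ⟨h1, fun i hi hne => h2 i (by tauto) hne⟩
    · rintro ⟨h1, h2⟩
      exact ⟨h1, fun i hp hne => h2 i (Or.inl hp) hne⟩
  | cons j t ih =>
    intro P S hS u
    simp only [List.foldl_cons]
    rw [ih (fun i => P i ∨ i = j) _ (step_lemma j hS)]
    constructor
    · rintro ⟨h1, h2⟩
      refine ⟨h1, fun i hi hne => h2 i ?_ hne⟩
      rcases hi with hp | hm
      · exact Or.inl (Or.inl hp)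
      · rcases List.mem_cons.mp hm with rfl | ht
        · exact Or.inl (Or.inr rfl)
        · exact Or.inr ht
    · rintro ⟨h1, h2⟩
      refine ⟨h1, fun i hi hne => h2 i ?_ hne⟩
      rcases hi with (hp | rfl) | ht
      · exact Or.inl hp
      · exact Or.inr (List.mem_cons_self)
      · exact Or.inr (List.mem_cons_of_mem _ ht)

open Classical in
/-- Starting from the indicator `M` of the set of implicants of `f` and applying the
Reduce transform once across each dimension, in any order, yields the indicator of the
set of prime implicants of `f`. -/
theorem stmt_13 {n : ℕ} (f : (Fin n → Bool) → Bool)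
    (M : QState n) (hM : ∀ u : MTerm n, M u = true ↔ Implicant f u)
    (l : List (Fin n)) (hnd : l.Nodup) (hall : ∀ i : Fin n, i ∈ l) :
    ∀ u : MTerm n,
      (l.foldl (fun S i => ReduceDim i S) M) u = true ↔ PrimeImplicant f u := by
  intro u
  rw [fold_lemma l (fun _ => False) M (fun u => by
    rw [hM u]; exact ⟨fun h => ⟨h, fun i hf => hf.elim⟩, fun h => h.1⟩)]
  constructor
  · rintro ⟨h1, h2⟩
    exact ⟨h1, fun i hne => h2 i (Or.inr (hall i)) hne⟩
  · rintro ⟨h1, h2⟩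
    exact ⟨h1, fun i _ hne => h2 i hne⟩
end
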